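/- Let d ≥ 1 and let R be a Borel probability measure on C₁ with endpoint disintegration (R^{xy}). Let m be a Borel probability measure on ℝ^d × ℝ^d with m ≪ R₀₁, and define the glued measure m ⊗ R^· ∈ P(C₁) by (m ⊗ R^·)(A) := ∫ R^{xy}(A) m(d(x,y)) for Borel A ⊆ C₁. Then the endpoint marginal of m ⊗ R^· equals m, and H(m ⊗ R^· ‖ R) = H(m ‖ R₀₁). (The entropy identity underlying the reduction (2.2) of the dynamic to the static Schrödinger problem.) -/

import Mathlib

open MeasureTheory ProbabilityTheory Set
open scoped ENNReal NNReal Classical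

noncomputable section

abbrev Euc (d : ℕ) := EuclideanSpace ℝ (Fin d)

/-- `C₁ = C([0,1], ℝ^d)` with the supremum metric. -/
abbrev PathSp (d : ℕ) := C(Set.Icc (0:ℝ) 1, Euc d)

instance (d : ℕ) : MeasurableSpace (PathSp d) := borel _
instance (d : ℕ) : BorelSpace (PathSp d) := ⟨rfl⟩

/-- Evaluation of a path at time `0`. -/
def ev0 {d : ℕ} (φ : PathSp d) : Euc d := φ ⟨0, Set.left_mem_Icc.mpr zero_le_one⟩

/-- Evaluation of a path at time `1`. -/
def ev1 {d : ℕ} (φ : PathSp d) : Euc d := φ ⟨1, Set.right_mem_Icc.mpr zero_le_one⟩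

/-- The endpoint map `φ ↦ (φ(0), φ(1))`. -/
def ep {d : ℕ} (φ : PathSp d) : Euc d × Euc d := (ev0 φ, ev1 φ)

/-- Relative entropy `H(p‖q) := ∫ log(dp/dq) dp ∈ [0,∞]` if `p ≪ q`, and `+∞` otherwise
(the integral split into its positive and negative parts). -/
def relEntropy {α : Type*} [MeasurableSpace α] (p q : Measure α) : ℝ≥0∞ :=
  if p ≪ q then
    (∫⁻ a, ENNReal.ofReal (Real.log ((p.rnDeriv q a).toReal)) ∂p)
      - (∫⁻ a, ENNReal.ofReal (-Real.log ((p.rnDeriv q a).toReal)) ∂p)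
  else ⊤

/-- The set `Π^{C₁}(μ,ν)` of path-space couplings: probability measures on `C₁` with
time-`0` marginal `μ` and time-`1` marginal `ν`. -/
def PathCouplings (d : ℕ) (μ ν : Measure (Euc d)) : Set (Measure (PathSp d)) :=
  {π | IsProbabilityMeasure π ∧ π.map ev0 = μ ∧ π.map ev1 = ν}

lemma measurable_ep {d : ℕ} : Measurable (ep (d := d)) := by
  have h0 : Continuous (ev0 (d := d)) := continuous_eval_const _
  have h1 : Continuous (ev1 (d := d)) := continuous_eval_const _
  exact (h0.prodMk h1).measurable

lemma kappa_fiber_ae {d : ℕ} (κ : Kernel (Euc d × Euc d) (PathSp d)) [IsMarkovKernel κ]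
    {z : Euc d × Euc d} (hz : (κ z) {φ : PathSp d | ep φ = z} = 1) :
    ∀ᵐ φ ∂(κ z), ep φ = z := by
  rw [ae_iff]
  have hfibm : MeasurableSet {φ : PathSp d | ep φ = z} :=
    measurable_ep (measurableSet_singleton z)
  have := measure_compl hfibm (measure_ne_top (κ z) _)
  simp only [hz, measure_univ] at this
  simpa [Set.compl_setOf] using this

/-- the entropy identity for glued measures: if `(R^{xy})` is the endpoint
disintegration of `R ∈ P(C₁)` (a Markov kernel `κ` with `R = R₀₁-glue of κ` and
`κ z` concentrated on the fiber over `z` for `R₀₁`-a.e. `z`), and `m ≪ R₀₁` is a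
probability measure on `ℝ^d × ℝ^d`, then the glued measure `m ⊗ R^·` has endpoint
marginal `m` and `H(m ⊗ R^· ‖ R) = H(m ‖ R₀₁)`. -/
theorem glued_measure_entropy_identity
    {d : ℕ} (hd : 1 ≤ d) (R : Measure (PathSp d)) [IsProbabilityMeasure R]
    (κ : Kernel (Euc d × Euc d) (PathSp d)) [IsMarkovKernel κ]
    (hfib : ∀ᵐ z ∂(R.map ep), (κ z) {φ : PathSp d | ep φ = z} = 1)
    (hdis : R = (R.map ep).bind (fun z => κ z))
    (m : Measure (Euc d × Euc d)) [IsProbabilityMeasure m]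
    (hac : m ≪ R.map ep) :
    (m.bind (fun z => κ z)).map ep = m ∧
    relEntropy (m.bind (fun z => κ z)) R = relEntropy m (R.map ep) := by
  classical
  have hepm : Measurable (ep (d := d)) := measurable_ep
  have hκ : Measurable fun z => (κ z : Measure (PathSp d)) := κ.measurable
  have hfib_m : ∀ᵐ z ∂m, (κ z) {φ : PathSp d | ep φ = z} = 1 := hac.ae_le hfib
  -- Part 1: endpoint marginal
  have hmap : (m.bind (fun z => κ z)).map ep = m := by
    ext A hA
    rw [Measure.map_apply hepm hA, Measure.bind_apply (hepm hA) hκ.aemeasurable]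
    have hcong : ∀ᵐ z ∂m, (κ z) (ep ⁻¹' A) = A.indicator (fun _ => (1:ℝ≥0∞)) z := by
      filter_upwards [hfib_m] with z hz
      have hae := kappa_fiber_ae κ hz
      by_cases hzA : z ∈ A
      · have h1 : (κ z) (ep ⁻¹' A) ≤ 1 := prob_le_one
        have h2 : (1:ℝ≥0∞) ≤ (κ z) (ep ⁻¹' A) := by
          rw [← hz]
          refine measure_mono (fun φ hφ => ?_)
          have h' : ep φ = z := hφ
          simp [Set.mem_preimage, h', hzA]
        simp [le_antisymm h1 h2, hzA]
      · have hms : MeasurableSet {φ : PathSp d | ep φ = z} :=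
          measurable_ep (measurableSet_singleton z)
        have hcnull : (κ z) {φ : PathSp d | ep φ = z}ᶜ = 0 := by
          rw [measure_compl hms (measure_ne_top _ _), hz]
          simp
        have h0 : (κ z) (ep ⁻¹' A) = 0 := by
          refine measure_mono_null ?_ hcnull
          intro φ hφ h
          exact hzA (h ▸ hφ)
        simp [h0, hzA]
    rw [lintegral_congr_ae hcong, lintegral_indicator hA]
    simp
  refine ⟨hmap, ?_⟩
  -- Part 2: entropy identity
  set ν : Measure (Euc d × Euc d) := R.map ep with hν
  set f : Euc d × Euc d → ℝ≥0∞ := m.rnDeriv ν with hf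
  have hf_meas : Measurable f := Measure.measurable_rnDeriv _ _
  haveI hPν : IsProbabilityMeasure ν := Measure.isProbabilityMeasure_map hepm.aemeasurable
  haveI : SigmaFinite ν := inferInstance
  haveI : m.HaveLebesgueDecomposition ν := inferInstance
  have hm_wd : ν.withDensity f = m := Measure.withDensity_rnDeriv_eq m ν hac
  have key : m.bind (fun z => κ z) = R.withDensity (fun φ => f (ep φ)) := by
    ext A hA
    rw [Measure.bind_apply hA hκ.aemeasurable, withDensity_apply _ hA, ← lintegral_indicator hA]
    calc ∫⁻ z, (κ z) A ∂m
        = ∫⁻ z, f z * (κ z) A ∂ν := by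
          rw [← hm_wd, lintegral_withDensity_eq_lintegral_mul ν hf_meas (κ.measurable_coe hA)]
          rfl
      _ = ∫⁻ z, ∫⁻ φ, A.indicator (fun φ => f (ep φ)) φ ∂(κ z) ∂ν := by
          refine lintegral_congr_ae ?_
          filter_upwards [hfib] with z hz
          have hae := kappa_fiber_ae κ hz
          calc f z * (κ z) A
              = ∫⁻ φ, A.indicator (fun _ => f z) φ ∂(κ z) := by
                rw [lintegral_indicator hA, setLIntegral_const, mul_comm]
            _ = ∫⁻ φ, A.indicator (fun φ => f (ep φ)) φ ∂(κ z) := by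
                refine lintegral_congr_ae ?_
                filter_upwards [hae] with φ hφ
                by_cases hφA : φ ∈ A <;> simp [hφA, hφ]
      _ = ∫⁻ φ, A.indicator (fun φ => f (ep φ)) φ ∂(R) := by
          have hcomp : Measurable fun φ : PathSp d => f (ep φ) := hf_meas.comp hepm
          rw [hdis, Measure.lintegral_bind hκ.aemeasurable (hcomp.indicator hA).aemeasurable]
  have hPR : m.bind (fun z => κ z) ≪ R := by
    rw [key]; exact withDensity_absolutelyContinuous R _
  have hrn : (m.bind (fun z => κ z)).rnDeriv R =ᵐ[R] fun φ => f (ep φ) := by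
    rw [key]; exact Measure.rnDeriv_withDensity R (hf_meas.comp hepm)
  have hrnP : ∀ᵐ φ ∂(m.bind (fun z => κ z)),
      (m.bind (fun z => κ z)).rnDeriv R φ = f (ep φ) := hPR.ae_le hrn
  rw [relEntropy, relEntropy, if_pos hPR, if_pos hac]
  have htrans : ∀ g : ℝ → ℝ≥0∞,
      Measurable g →
      ∫⁻ φ, g (Real.log (((m.bind (fun z => κ z)).rnDeriv R φ).toReal))
        ∂(m.bind (fun z => κ z))
      = ∫⁻ z, g (Real.log ((m.rnDeriv ν z).toReal)) ∂m := by
    intro g hg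
    have h1 : ∫⁻ φ, g (Real.log (((m.bind (fun z => κ z)).rnDeriv R φ).toReal))
        ∂(m.bind (fun z => κ z))
        = ∫⁻ φ, g (Real.log ((f (ep φ)).toReal)) ∂(m.bind (fun z => κ z)) := by
      refine lintegral_congr_ae ?_
      filter_upwards [hrnP] with φ hφ
      rw [hφ]
    rw [h1, ← hf]
    have hmeas : Measurable fun z => g (Real.log ((f z).toReal)) :=
      hg.comp (Real.measurable_log.comp (ENNReal.measurable_toReal.comp hf_meas))
    conv_rhs => rw [← hmap]
    rw [lintegral_map hmeas hepm]
  congr 1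
  · exact htrans (fun x => ENNReal.ofReal x) ENNReal.measurable_ofReal
  · exact htrans (fun x => ENNReal.ofReal (-x))
      (ENNReal.measurable_ofReal.comp measurable_neg)


end
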